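/- Let $V = (v_1,\dots,v_n)$ and $V' = (v'_1,\dots,v'_n)$ be finite families of vectors each spanning $\mathbb{R}^d$, and set $Q = \sum_{i=1}^n v_i v_i^t$ and $Q' = \sum_{i=1}^n v'_i (v'_i)^t$ (both positive definite, hence invertible). Then for any permutation $\sigma \in \mathrm{Sym}(n)$, there exists $A \in GL_d(\mathbb{R})$ with $A v_i = v'_{\sigma(i)}$ for all $i$ if and only if $v_i^t Q^{-1} v_j = (v'_{\sigma(i)})^t (Q')^{-1} v'_{\sigma(j)}$ for all $i,j \in \{1,\dots,n\}$. -/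

import Mathlib

open Matrix

lemma aux_vecMulVec_mulVec {d : ℕ} (a b x : Fin d → ℝ) :
    (vecMulVec a b).mulVec x = (b ⬝ᵥ x) • a := by
  ext k
  simp only [vecMulVec, mulVec, dotProduct, Matrix.of_apply, Pi.smul_apply, smul_eq_mul]
  rw [Finset.sum_mul]
  exact Finset.sum_congr rfl fun i _ => by ring

lemma aux_sum_mulVec {d n : ℕ} (M : Fin n → Matrix (Fin d) (Fin d) ℝ) (x : Fin d → ℝ) :
    (∑ i : Fin n, M i).mulVec x = ∑ i : Fin n, (M i).mulVec x := by
  ext k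
  simp only [mulVec, dotProduct, Matrix.sum_apply, Finset.sum_apply, Finset.sum_mul]
  exact Finset.sum_comm

lemma aux_dot_sum {d n : ℕ} (x : Fin d → ℝ) (f : Fin n → (Fin d → ℝ)) :
    x ⬝ᵥ (∑ i : Fin n, f i) = ∑ i : Fin n, x ⬝ᵥ f i := by
  simp only [dotProduct, Finset.sum_apply, Finset.mul_sum]
  exact Finset.sum_comm

lemma aux_conj {d : ℕ} (M : Matrix (Fin d) (Fin d) ℝ) (a b : Fin d → ℝ) :
    vecMulVec (M.mulVec a) (M.mulVec b) = M * vecMulVec a b * Mᵀ := by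
  ext j k
  simp only [vecMulVec, Matrix.of_apply, mulVec, dotProduct, Matrix.mul_apply,
    Matrix.transpose_apply]
  rw [Finset.sum_mul_sum, Finset.sum_comm]
  refine Finset.sum_congr rfl fun c _ => ?_
  rw [Finset.sum_mul]
  exact Finset.sum_congr rfl fun x _ => by ring

lemma aux_Q_unit {d n : ℕ} (v : Fin n → (Fin d → ℝ))
    (hspan : Submodule.span ℝ (Set.range v) = ⊤)
    (Q : Matrix (Fin d) (Fin d) ℝ)
    (hQ : Q = ∑ i : Fin n, Matrix.vecMulVec (v i) (v i)) : IsUnit Q := by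
  rw [← Matrix.mulVec_injective_iff_isUnit]
  rw [show Q.mulVec = Q.mulVecLin from rfl, ← LinearMap.ker_eq_bot]
  rw [Submodule.eq_bot_iff]
  intro x hx
  have hx0 : Q.mulVec x = 0 := hx
  have hquad : (0:ℝ) = ∑ i : Fin n, (v i ⬝ᵥ x) ^ 2 := by
    have h1 : x ⬝ᵥ Q.mulVec x = 0 := by rw [hx0, dotProduct_zero]
    rw [← h1, hQ, aux_sum_mulVec, aux_dot_sum]
    refine Finset.sum_congr rfl fun i _ => ?_
    rw [aux_vecMulVec_mulVec, dotProduct_smul, smul_eq_mul, sq, dotProduct_comm]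
  have hzero : ∀ i, v i ⬝ᵥ x = 0 := by
    intro i
    have hnn : ∀ i ∈ Finset.univ, (0:ℝ) ≤ (v i ⬝ᵥ x) ^ 2 := fun i _ => sq_nonneg _
    have := (Finset.sum_eq_zero_iff_of_nonneg hnn).mp hquad.symm i (Finset.mem_univ i)
    exact pow_eq_zero_iff (two_ne_zero) |>.mp this
  have hall : ∀ w : Fin d → ℝ, w ⬝ᵥ x = 0 := by
    intro w
    have hw : w ∈ Submodule.span ℝ (Set.range v) := by rw [hspan]; trivial
    induction hw using Submodule.span_induction with
    | mem w hw => obtain ⟨i, rfl⟩ := hw; exact hzero i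
    | zero => simp
    | add a b _ _ ha hb => simp [add_dotProduct, ha, hb]
    | smul c a _ ha => simp [smul_dotProduct, ha]
  exact dotProduct_self_eq_zero.mp (hall x)

theorem stmt_4 (d n : ℕ) (v v' : Fin n → (Fin d → ℝ))
    (hspan : Submodule.span ℝ (Set.range v) = ⊤)
    (hspan' : Submodule.span ℝ (Set.range v') = ⊤)
    (Q Q' : Matrix (Fin d) (Fin d) ℝ)
    (hQ : Q = ∑ i : Fin n, Matrix.vecMulVec (v i) (v i))
    (hQ' : Q' = ∑ i : Fin n, Matrix.vecMulVec (v' i) (v' i))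
    (σ : Equiv.Perm (Fin n)) :
    (∃ A : Matrix (Fin d) (Fin d) ℝ, IsUnit A ∧
        ∀ i, A.mulVec (v i) = v' (σ i)) ↔
      (∀ i j, dotProduct (v i) (Q⁻¹.mulVec (v j))
        = dotProduct (v' (σ i)) (Q'⁻¹.mulVec (v' (σ j)))) := by
  have hQu : IsUnit Q := aux_Q_unit v hspan Q hQ
  have hQ'u : IsUnit Q' := aux_Q_unit v' hspan' Q' hQ'
  constructor
  · rintro ⟨A, hA, hAv⟩
    have hAt : IsUnit Aᵀ := (Matrix.isUnit_transpose A).mpr hA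
    have hQQ' : Q' = A * Q * Aᵀ := by
      rw [hQ', hQ, Finset.mul_sum, Finset.sum_mul]
      rw [← Equiv.sum_comp σ (fun i => vecMulVec (v' i) (v' i))]
      exact Finset.sum_congr rfl fun i _ => by rw [← hAv i, aux_conj]
    intro i j
    have hinv : Q'⁻¹ = Aᵀ⁻¹ * Q⁻¹ * A⁻¹ := by
      rw [hQQ', Matrix.mul_inv_rev, Matrix.mul_inv_rev, Matrix.mul_assoc]
    rw [← hAv i, ← hAv j, hinv]
    rw [Matrix.mulVec_mulVec, Matrix.mul_assoc (Aᵀ⁻¹ * Q⁻¹),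
      Matrix.nonsing_inv_mul A ((Matrix.isUnit_iff_isUnit_det A).mp hA), Matrix.mul_one]
    conv_rhs => rw [Matrix.dotProduct_mulVec, Matrix.vecMul_mulVec, ← Matrix.mul_assoc,
      Matrix.mul_nonsing_inv Aᵀ ((Matrix.isUnit_iff_isUnit_det Aᵀ).mp hAt),
      Matrix.one_mul, ← Matrix.dotProduct_mulVec]
  · intro hcol
    have key : ∀ j, ((∑ i : Fin n, vecMulVec (v' (σ i)) (v i)) * Q⁻¹).mulVec (v j)
        = v' (σ j) := by
      intro j
      rw [← Matrix.mulVec_mulVec, aux_sum_mulVec]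
      simp only [aux_vecMulVec_mulVec]
      calc ∑ i : Fin n, (v i ⬝ᵥ Q⁻¹.mulVec (v j)) • v' (σ i)
          = ∑ i : Fin n, (v' (σ i) ⬝ᵥ Q'⁻¹.mulVec (v' (σ j))) • v' (σ i) := by
            refine Finset.sum_congr rfl fun i _ => ?_; rw [hcol i j]
        _ = ∑ k : Fin n, (v' k ⬝ᵥ Q'⁻¹.mulVec (v' (σ j))) • v' k :=
            Equiv.sum_comp σ (fun k => (v' k ⬝ᵥ Q'⁻¹.mulVec (v' (σ j))) • v' k)
        _ = Q'.mulVec (Q'⁻¹.mulVec (v' (σ j))) := by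
            rw [hQ', aux_sum_mulVec]
            exact Finset.sum_congr rfl fun k _ => (aux_vecMulVec_mulVec _ _ _).symm
        _ = v' (σ j) := by
            rw [Matrix.mulVec_mulVec, Matrix.mul_nonsing_inv Q' ((Matrix.isUnit_iff_isUnit_det Q').mp hQ'u),
              Matrix.one_mulVec]
    refine ⟨_, ?_, key⟩
    rw [← Matrix.mulVec_surjective_iff_isUnit]
    have hrange : ∀ w ∈ Submodule.span ℝ (Set.range v'),
        ∃ x, ((∑ i : Fin n, vecMulVec (v' (σ i)) (v i)) * Q⁻¹).mulVec x = w := by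
      intro w hw
      induction hw using Submodule.span_induction with
      | mem w hw =>
          obtain ⟨k, rfl⟩ := hw
          exact ⟨v (σ.symm k), by rw [key (σ.symm k)]; simp⟩
      | zero => exact ⟨0, Matrix.mulVec_zero _⟩
      | add a b _ _ ha hb =>
          obtain ⟨x, hx⟩ := ha; obtain ⟨y, hy⟩ := hb
          exact ⟨x + y, by rw [Matrix.mulVec_add, hx, hy]⟩
      | smul c a _ ha =>
          obtain ⟨x, hx⟩ := ha
          exact ⟨c • x, by rw [Matrix.mulVec_smul, hx]⟩
    intro w
    exact hrange w (by rw [hspan']; trivial)
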